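/- A γ-contraction on the complete metric space of state-indexed outcome distributions (with sup-Wasserstein metric) has a unique fixed point, which equals the law of the discounted feature sum ∑_{t=1}^∞ γ^{t-1} φ(s_t) under the behavior policy started at each state. -/

import Mathlib

set_option maxHeartbeats 1000000

open MeasureTheory ENNReal

/-- The unit cube `[0,1]^d`. -/
def unitCube (d : ℕ) : Set (Fin d → ℝ) := {f | ∀ i, f i ∈ Set.Icc (0 : ℝ) 1}

/-- The distributional Bellman operator on state-indexed outcome distributions:
sample `s' ~ κ s`, sample `ψ' ~ p(·|s')`, output `φ(s) + γ ψ'`. -/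
noncomputable def Tdist {S : Type*} [MeasurableSpace S] {d : ℕ}
    (γ : ℝ) (φ : S → Fin d → ℝ) (κ : S → Measure S)
    (p : S → Measure (Fin d → ℝ)) (s : S) : Measure (Fin d → ℝ) :=
  (κ s).bind fun s' => (p s').map fun ψ => φ s + γ • ψ

section Aux

open NNReal Metric Filter Topology

set_option linter.unusedSectionVars false

lemma measurableSet_unitCube (d : ℕ) : MeasurableSet (unitCube d) := by
  have : unitCube d = ⋂ i, (fun f : Fin d → ℝ => f i) ⁻¹' Set.Icc 0 1 := by
    ext f; simp [unitCube, Set.mem_iInter]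
  rw [this]
  exact MeasurableSet.iInter fun i => (measurable_pi_apply i) measurableSet_Icc

lemma bind_eq_sum' {S β : Type*} [Fintype S] [MeasurableSpace S] [MeasurableSingletonClass S]
    [MeasurableSpace β] (m : Measure S) (ν : S → Measure β) :
    m.bind ν = ∑ s, m {s} • ν s := by
  ext E hE
  rw [Measure.bind_apply hE (measurable_of_countable ν).aemeasurable]
  rw [lintegral_fintype]
  rw [Measure.finset_sum_apply]
  simp [mul_comm]

lemma sum_singleton_eq_one {S : Type*} [Fintype S] [MeasurableSpace S]
    [MeasurableSingletonClass S] (m : Measure S) [IsProbabilityMeasure m] :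
    ∑ s, m {s} = 1 := by
  classical
  have hdisj : ((Finset.univ : Finset S) : Set S).PairwiseDisjoint (fun s => ({s} : Set S)) := by
    intro a _ b _ hab
    simp [Function.onFun, Set.disjoint_singleton_left, hab]
  have h := measure_biUnion_finset hdisj (fun s _ => measurableSet_singleton s) (μ := m)
  have hu : ⋃ s ∈ (Finset.univ : Finset S), ({s} : Set S) = Set.univ := by
    ext x; simp
  rw [hu] at h
  rw [← h, measure_univ]

lemma integrable_of_bdd {X : Type*} [MeasurableSpace X] {μ : Measure X} [IsFiniteMeasure μ]
    {f : X → ℝ} (hf : Measurable f) (C : ℝ) (hb : ∀ x, |f x| ≤ C) : Integrable f μ := by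
  refine (integrable_const C).mono' hf.aestronglyMeasurable ?_
  exact Filter.Eventually.of_forall fun x => by simpa [Real.norm_eq_abs] using hb x

end Aux

section ExtLip

open NNReal Metric Filter Topology

lemma ext_of_lip {d : ℕ} {μ ν : Measure (Fin d → ℝ)}
    [IsProbabilityMeasure μ] [IsProbabilityMeasure ν]
    (h : ∀ f : (Fin d → ℝ) → ℝ, LipschitzWith 1 f → (∀ x, f x ∈ Set.Icc (0:ℝ) 1) →
      ∫ x, f x ∂μ = ∫ x, f x ∂ν) : μ = ν := by
  have h' : ∀ (K : ℝ) (f : (Fin d → ℝ) → ℝ), 0 < K → LipschitzWith K.toNNReal f →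
      (∀ x, f x ∈ Set.Icc (0:ℝ) 1) → ∫ x, f x ∂μ = ∫ x, f x ∂ν := by
    intro K f hKpos hf hf01
    rcases le_or_gt K 1 with hK | hK
    · refine h f (hf.weaken ?_) hf01
      simpa using Real.toNNReal_mono hK
    · set ε : ℝ := K⁻¹ with hε
      have hεpos : (0:ℝ) < ε := by positivity
      have hε1 : ε ≤ 1 := by
        rw [hε, inv_le_one_iff₀]; right; linarith
      have hlip : LipschitzWith 1 (fun x => ε * f x) := by
        apply LipschitzWith.of_dist_le_mul
        intro x y
        have := hf.dist_le_mul x y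
        rw [Real.dist_eq, Real.coe_toNNReal _ hKpos.le] at this
        rw [Real.dist_eq]
        have habs : |ε * f x - ε * f y| = ε * |f x - f y| := by
          rw [← mul_sub, abs_mul, abs_of_nonneg hεpos.le]
        rw [habs]
        calc ε * |f x - f y| ≤ ε * (K * dist x y) := by
              apply mul_le_mul_of_nonneg_left _ hεpos.le
              have h2 := hf.dist_le_mul x y
              rwa [Real.dist_eq, Real.coe_toNNReal _ hKpos.le] at h2
          _ = dist x y := by rw [hε, ← mul_assoc, inv_mul_cancel₀ hKpos.ne', one_mul]
          _ ≤ 1 * dist x y := by rw [one_mul]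
      have hrange : ∀ x, ε * f x ∈ Set.Icc (0:ℝ) 1 := by
        intro x
        obtain ⟨h0, h1⟩ := hf01 x
        exact ⟨by positivity, by nlinarith⟩
      have := h _ hlip hrange
      rw [integral_const_mul, integral_const_mul] at this
      exact mul_left_cancel₀ (ne_of_gt hεpos) this
  have hclosed : ∀ F : Set (Fin d → ℝ), IsClosed F → μ F = ν F := by
    intro F hF
    rcases F.eq_empty_or_nonempty with rfl | hFne
    · simp
    set g : ℕ → (Fin d → ℝ) → ℝ := fun n x => max (1 - ((n:ℝ)+1) * infDist x F) 0 with hg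
    have hglip : ∀ n : ℕ, LipschitzWith ((n:ℝ)+1).toNNReal (g n) := by
      intro n
      apply LipschitzWith.of_dist_le_mul
      intro x y
      have hu : |infDist x F - infDist y F| ≤ dist x y := by
        have := (lipschitz_infDist_pt F).dist_le_mul x y
        rwa [Real.dist_eq, NNReal.coe_one, one_mul] at this
      rw [Real.dist_eq, Real.coe_toNNReal _ (by positivity)]
      calc |g n x - g n y| ≤ |(1 - ((n:ℝ)+1) * infDist x F) - (1 - ((n:ℝ)+1) * infDist y F)| :=
            abs_max_sub_max_le_abs _ _ _
        _ ≤ ((n:ℝ)+1) * dist x y := by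
            have hc : (0:ℝ) ≤ (n:ℝ)+1 := by positivity
            have h1 : |(1 - ((n:ℝ)+1) * infDist x F) - (1 - ((n:ℝ)+1) * infDist y F)|
                = ((n:ℝ)+1) * |infDist x F - infDist y F| := by
              rw [show (1 - ((n:ℝ)+1) * infDist x F) - (1 - ((n:ℝ)+1) * infDist y F)
                  = ((n:ℝ)+1) * (infDist y F - infDist x F) from by ring, abs_mul,
                abs_of_nonneg hc, abs_sub_comm]
            rw [h1]
            exact mul_le_mul_of_nonneg_left hu hc
    have hg01 : ∀ n x, g n x ∈ Set.Icc (0:ℝ) 1 := by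
      intro n x
      refine ⟨le_max_right _ _, ?_⟩
      apply max_le _ zero_le_one
      have h1 : (0:ℝ) ≤ ((n:ℝ)+1) * infDist x F := mul_nonneg (by positivity) infDist_nonneg
      linarith
    have hgmeas : ∀ n, Measurable (g n) := fun n => (hglip n).continuous.measurable
    have htend : ∀ (m : Measure (Fin d → ℝ)), IsProbabilityMeasure m →
        Tendsto (fun n => ∫ x, g n x ∂m) atTop (𝓝 ((m F).toReal)) := by
      intro m _
      have key : Tendsto (fun n => ∫ x, g n x ∂m) atTop
          (𝓝 (∫ x, F.indicator (1 : (Fin d → ℝ) → ℝ) x ∂m)) := by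
        apply tendsto_integral_of_dominated_convergence (fun _ => (1:ℝ))
        · exact fun n => (hgmeas n).aestronglyMeasurable
        · exact integrable_const 1
        · intro n
          exact Filter.Eventually.of_forall fun x => by
            rw [Real.norm_eq_abs, abs_of_nonneg (hg01 n x).1]; exact (hg01 n x).2
        · apply Filter.Eventually.of_forall
          intro x
          by_cases hx : x ∈ F
          · have heq : ∀ n, g n x = 1 := by
              intro n; simp [hg, infDist_zero_of_mem hx]
            simp only [hx, Set.indicator_of_mem]
            simpa [heq] using tendsto_const_nhds
          · have hpos : 0 < infDist x F := (hF.notMem_iff_infDist_pos hFne).mp hx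
            have hev : ∀ᶠ n : ℕ in atTop, g n x = 0 := by
              have hten : Tendsto (fun n : ℕ => ((n:ℝ)+1)) atTop atTop :=
                tendsto_natCast_atTop_atTop.atTop_add tendsto_const_nhds
              filter_upwards [hten.eventually_ge_atTop (1 / infDist x F)] with n hn
              have h2 : 1 ≤ ((n:ℝ)+1) * infDist x F := by
                rw [div_le_iff₀ hpos] at hn
                linarith
              rw [hg]; simp only []
              rw [max_eq_right]; linarith
            simp only [hx, Set.indicator_of_notMem, not_false_iff]
            exact Tendsto.congr' (hev.mono fun n hn => hn.symm) tendsto_const_nhds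
      rwa [integral_indicator_one hF.measurableSet] at key
    have := tendsto_nhds_unique
      ((htend μ inferInstance).congr
        (fun n => h' _ _ (by positivity) (hglip n) (hg01 n))) (htend ν inferInstance)
    exact (ENNReal.toReal_eq_toReal_iff' (measure_ne_top μ F) (measure_ne_top ν F)).mp this
  refine MeasureTheory.ext_of_generate_finite {s | IsClosed s} ?_ isPiSystem_isClosed
    (fun F hFc => hclosed F hFc) (hclosed _ isClosed_univ)
  rw [BorelSpace.measurable_eq (α := Fin d → ℝ), borel_eq_generateFrom_isClosed]

end ExtLip

section Fm

open NNReal Metric Filter Topology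

set_option linter.unusedSectionVars false

variable {S : Type*} [Fintype S] [MeasurableSpace S] [MeasurableSingletonClass S] {d : ℕ}
  {γ : ℝ} (hγ0 : 0 ≤ γ) (hγ1 : γ < 1) {φ : S → Fin d → ℝ}
  (hφ : ∀ s i, φ s i ∈ Set.Icc (0 : ℝ) (1 - γ))

include hγ0 hγ1 hφ

lemma summable_disc (traj : ℕ → S) : Summable (fun t : ℕ => γ ^ t • φ (traj t)) := by
  apply Summable.of_norm_bounded (summable_geometric_of_lt_one hγ0 hγ1)
  intro t
  rw [norm_smul]
  have h1 : ‖φ (traj t)‖ ≤ 1 := by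
    refine (pi_norm_le_iff_of_nonneg zero_le_one).mpr fun i => ?_
    obtain ⟨ha, hb⟩ := hφ (traj t) i
    rw [Real.norm_eq_abs, abs_of_nonneg ha]
    linarith
  calc ‖γ ^ t‖ * ‖φ (traj t)‖ ≤ ‖γ ^ t‖ * 1 := by
        exact mul_le_mul_of_nonneg_left h1 (norm_nonneg _)
    _ = γ ^ t := by
        rw [mul_one, Real.norm_eq_abs, abs_of_nonneg (pow_nonneg hγ0 t)]

lemma measurable_Fm : Measurable (fun traj : ℕ → S => ∑' t : ℕ, γ ^ t • φ (traj t)) := by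
  apply measurable_of_tendsto_metrizable
    (f := fun n (traj : ℕ → S) => ∑ t ∈ Finset.range n, γ ^ t • φ (traj t))
  · intro n
    apply Finset.measurable_sum
    intro t _
    exact (measurable_of_countable (fun s => γ ^ t • φ s)).comp (measurable_pi_apply t)
  · rw [tendsto_pi_nhds]
    intro traj
    exact (summable_disc hγ0 hγ1 hφ traj).hasSum.tendsto_sum_nat

lemma Fm_mem_unitCube (traj : ℕ → S) :
    (∑' t : ℕ, γ ^ t • φ (traj t)) ∈ unitCube d := by
  intro i
  have hsum := summable_disc hγ0 hγ1 hφ traj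
  have happ : (∑' t : ℕ, γ ^ t • φ (traj t)) i = ∑' t : ℕ, γ ^ t * φ (traj t) i := by
    rw [tsum_apply hsum]
    simp [Pi.smul_apply, smul_eq_mul]
  have hsumi : Summable (fun t : ℕ => γ ^ t * φ (traj t) i) := by
    apply Summable.of_norm_bounded (summable_geometric_of_lt_one hγ0 hγ1)
    intro t
    obtain ⟨ha, hb⟩ := hφ (traj t) i
    rw [Real.norm_eq_abs, abs_mul, abs_of_nonneg (pow_nonneg hγ0 t), abs_of_nonneg ha]
    have h1 : φ (traj t) i ≤ 1 := by linarith
    calc γ ^ t * φ (traj t) i ≤ γ ^ t * 1 := by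
          exact mul_le_mul_of_nonneg_left h1 (pow_nonneg hγ0 t)
      _ = γ ^ t := mul_one _
  rw [happ]
  constructor
  · apply tsum_nonneg
    intro t
    exact mul_nonneg (pow_nonneg hγ0 t) (hφ (traj t) i).1
  · have hb : ∀ t, γ ^ t * φ (traj t) i ≤ γ ^ t * (1 - γ) :=
      fun t => mul_le_mul_of_nonneg_left (hφ (traj t) i).2 (pow_nonneg hγ0 t)
    have hgs : Summable (fun t : ℕ => γ ^ t * (1 - γ)) :=
      (summable_geometric_of_lt_one hγ0 hγ1).mul_right _
    calc (∑' t : ℕ, γ ^ t * φ (traj t) i) ≤ ∑' t : ℕ, γ ^ t * (1 - γ) :=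
          Summable.tsum_le_tsum hb hsumi hgs
      _ = (∑' t : ℕ, γ ^ t) * (1 - γ) := tsum_mul_right
      _ = (1 - γ)⁻¹ * (1 - γ) := by rw [tsum_geometric_of_lt_one hγ0 hγ1]
      _ = 1 := inv_mul_cancel₀ (by linarith)

lemma Fm_rec (traj : ℕ → S) :
    (∑' t : ℕ, γ ^ t • φ (traj t))
      = φ (traj 0) + γ • ∑' t : ℕ, γ ^ t • φ (traj (t + 1)) := by
  have hsum := summable_disc hγ0 hγ1 hφ traj
  rw [Summable.tsum_eq_zero_add hsum]
  simp only [pow_zero, one_smul]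
  congr 1
  rw [← Summable.tsum_const_smul γ (summable_disc hγ0 hγ1 hφ (fun t => traj (t + 1)))]
  congr 1
  funext t
  rw [smul_smul, ← pow_succ']

omit hγ0 hγ1 hφ in
lemma bind_map_comm {S β χ : Type*} [Fintype S] [MeasurableSpace S] [MeasurableSingletonClass S]
    [MeasurableSpace β] [MeasurableSpace χ] (m : Measure S) (ν : S → Measure β)
    {g : β → χ} (hg : Measurable g) :
    m.bind (fun s' => (ν s').map g) = (m.bind ν).map g := by
  ext E hE
  rw [Measure.bind_apply hE (measurable_of_countable _).aemeasurable,
    Measure.map_apply hg hE,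
    Measure.bind_apply (hg hE) (measurable_of_countable _).aemeasurable]
  apply lintegral_congr
  intro s'
  rw [Measure.map_apply hg hE]

lemma law_is_fixed (κ : S → Measure S)
    (μ : S → Measure (ℕ → S))
    (hstart : ∀ s, μ s {traj : ℕ → S | traj 0 = s}ᶜ = 0)
    (hMarkov : ∀ s, (μ s).map (fun traj t => traj (t + 1)) = (κ s).bind μ) (s : S) :
    Tdist γ φ κ (fun s' => (μ s').map (fun traj => ∑' t : ℕ, γ ^ t • φ (traj t))) s
      = (μ s).map (fun traj => ∑' t : ℕ, γ ^ t • φ (traj t)) := by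
  set Fm : (ℕ → S) → (Fin d → ℝ) := fun traj => ∑' t : ℕ, γ ^ t • φ (traj t) with hFmdef
  set A : (Fin d → ℝ) → (Fin d → ℝ) := fun ψ => φ s + γ • ψ with hAdef
  have hA : Measurable A := by
    have : Continuous A := continuous_const.add (continuous_id.const_smul γ)
    exact this.measurable
  have hFm : Measurable Fm := measurable_Fm hγ0 hγ1 hφ
  have hshift : Measurable (fun traj : ℕ → S => fun t => traj (t + 1)) :=
    measurable_pi_lambda _ (fun t => measurable_pi_apply (t + 1))
  calc Tdist γ φ κ (fun s' => (μ s').map Fm) s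
      = (κ s).bind (fun s' => (μ s').map (A ∘ Fm)) := by
        unfold Tdist
        congr 1
        funext s'
        rw [← Measure.map_map hA hFm]
    _ = ((κ s).bind μ).map (A ∘ Fm) := bind_map_comm _ _ (hA.comp hFm)
    _ = ((μ s).map (fun traj t => traj (t + 1))).map (A ∘ Fm) := by rw [hMarkov s]
    _ = (μ s).map ((A ∘ Fm) ∘ (fun traj t => traj (t + 1))) :=
        Measure.map_map (hA.comp hFm) hshift
    _ = (μ s).map Fm := by
        apply Measure.map_congr
        have hae : ∀ᵐ traj ∂(μ s), traj 0 = s := by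
          rw [MeasureTheory.ae_iff]
          exact hstart s
        filter_upwards [hae] with traj h0
        show A (Fm (fun t => traj (t + 1))) = Fm traj
        rw [hAdef, hFmdef]
        simp only []
        rw [Fm_rec hγ0 hγ1 hφ traj, h0]

end Fm

section Contraction

open NNReal Metric Filter Topology

set_option linter.unusedSectionVars false

variable {S : Type*} [Fintype S] [MeasurableSpace S] [MeasurableSingletonClass S] {d : ℕ}
  {γ : ℝ} {φ : S → Fin d → ℝ}

lemma isFinite_smul {X : Type*} [MeasurableSpace X] (c : ℝ≥0∞) (hc : c ≠ ⊤) (m : Measure X)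
    [IsFiniteMeasure m] : IsFiniteMeasure (c • m) := by
  constructor
  rw [Measure.smul_apply, smul_eq_mul]
  exact ENNReal.mul_lt_top hc.lt_top (measure_lt_top m _)

lemma cube_ae {d : ℕ} (m : Measure (Fin d → ℝ)) (hm : m (unitCube d)ᶜ = 0) :
    ∀ᵐ ψ ∂m, ψ ∈ unitCube d := by
  rw [MeasureTheory.ae_iff]
  exact hm

/-- Integral of a bounded measurable function against `Tdist p` as a weighted sum. -/
lemma integral_Tdist (κ : S → Measure S) (hκ : ∀ s, IsProbabilityMeasure (κ s))
    (p : S → Measure (Fin d → ℝ)) (hp : ∀ s, IsProbabilityMeasure (p s))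
    {f : (Fin d → ℝ) → ℝ} (hfm : Measurable f) (hf01 : ∀ x, f x ∈ Set.Icc (0:ℝ) 1) (s : S) :
    ∫ x, f x ∂(Tdist γ φ κ p s)
      = ∑ s', (κ s {s'}).toReal * ∫ ψ, f (φ s + γ • ψ) ∂(p s') := by
  have hA : Measurable (fun ψ : Fin d → ℝ => φ s + γ • ψ) :=
    (continuous_const.add (continuous_id.const_smul γ)).measurable
  unfold Tdist
  rw [bind_eq_sum']
  have hfin : ∀ s' : S, IsFiniteMeasure ((κ s {s'}) • ((p s').map fun ψ => φ s + γ • ψ)) := by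
    intro s'
    haveI : IsProbabilityMeasure ((p s').map fun ψ => φ s + γ • ψ) :=
      Measure.isProbabilityMeasure_map hA.aemeasurable
    exact isFinite_smul _ (measure_ne_top _ _) _
  rw [integral_finset_sum_measure]
  · apply Finset.sum_congr rfl
    intro s' _
    haveI := hfin s'
    rw [integral_smul_measure, integral_map hA.aemeasurable hfm.aestronglyMeasurable,
      smul_eq_mul]
  · intro s' _
    haveI := hfin s'
    exact integrable_of_bdd hfm 1 (fun x => by
      rw [abs_of_nonneg (hf01 x).1]; exact (hf01 x).2)

lemma abs_min_sub_min_le_abs' (a b c : ℝ) : |min c a - min c b| ≤ |a - b| := by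
  have h := abs_max_sub_max_le_abs (-a) (-b) (-c)
  have h1 : max (-a) (-c) = -(min a c) := max_neg_neg a c
  have h2 : max (-b) (-c) = -(min b c) := max_neg_neg b c
  rw [h1, h2] at h
  calc |min c a - min c b| = |(-(min a c)) - (-(min b c))| := by
        rw [min_comm c a, min_comm c b]; rw [abs_sub_comm]; ring_nf
    _ ≤ |(-a) - (-b)| := h
    _ = |a - b| := by rw [abs_sub_comm]; ring_nf

lemma contraction_integrals (hγ0 : 0 ≤ γ) (hγ1 : γ < 1)
    (hφ : ∀ s i, φ s i ∈ Set.Icc (0 : ℝ) (1 - γ))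
    (κ : S → Measure S) (hκ : ∀ s, IsProbabilityMeasure (κ s))
    (q r : S → Measure (Fin d → ℝ))
    (hq : ∀ s, IsProbabilityMeasure (q s) ∧ q s (unitCube d)ᶜ = 0)
    (hr : ∀ s, IsProbabilityMeasure (r s) ∧ r s (unitCube d)ᶜ = 0)
    (hfq : ∀ s, Tdist γ φ κ q s = q s) (hfr : ∀ s, Tdist γ φ κ r s = r s) :
    ∀ f : (Fin d → ℝ) → ℝ, LipschitzWith 1 f → (∀ x, f x ∈ Set.Icc (0:ℝ) 1) →
      ∀ s, ∫ x, f x ∂(q s) = ∫ x, f x ∂(r s) := by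
  have key : ∀ n : ℕ, ∀ f : (Fin d → ℝ) → ℝ, LipschitzWith 1 f →
      (∀ x, f x ∈ Set.Icc (0:ℝ) 1) → ∀ s,
      |∫ x, f x ∂(q s) - ∫ x, f x ∂(r s)| ≤ 2 * γ ^ n := by
    intro n
    induction n with
    | zero =>
      intro f hf hf01 s
      haveI := (hq s).1
      haveI := (hr s).1
      have hbd : ∀ (m : Measure (Fin d → ℝ)), IsProbabilityMeasure m →
          |∫ x, f x ∂m| ≤ 1 := by
        intro m _
        have := norm_integral_le_of_norm_le_const (μ := m) (f := f) (C := 1)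
          (Filter.Eventually.of_forall fun x => by
            rw [Real.norm_eq_abs, abs_of_nonneg (hf01 x).1]; exact (hf01 x).2)
        simpa [measure_univ] using this
      have h1 := hbd (q s) inferInstance
      have h2 := hbd (r s) inferInstance
      rw [pow_zero, mul_one]
      calc |∫ x, f x ∂(q s) - ∫ x, f x ∂(r s)|
          ≤ |∫ x, f x ∂(q s)| + |∫ x, f x ∂(r s)| := abs_sub _ _
        _ ≤ 2 := by linarith
    | succ n ih =>
      intro f hf hf01 s
      haveI hqs := fun s' => (hq s').1
      haveI hrs := fun s' => (hr s').1
      have hfm : Measurable f := hf.continuous.measurable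
      have hTq := integral_Tdist (γ := γ) (φ := φ) κ hκ q hqs hfm hf01 s
      have hTr := integral_Tdist (γ := γ) (φ := φ) κ hκ r hrs hfm hf01 s
      rw [← hfq s, ← hfr s, hTq, hTr, ← Finset.sum_sub_distrib]
      -- bound each term
      have hterm : ∀ s' : S,
          |∫ ψ, f (φ s + γ • ψ) ∂(q s') - ∫ ψ, f (φ s + γ • ψ) ∂(r s')| ≤ γ * (2 * γ ^ n) := by
        intro s'
        set g : (Fin d → ℝ) → ℝ := fun ψ => f (φ s + γ • ψ) with hgdef
        rcases eq_or_lt_of_le hγ0 with hγz | hγpos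
        · -- γ = 0 : g is constant
          have hgconst : ∀ ψ, g ψ = f (φ s) := by
            intro ψ; rw [hgdef]; simp [← hγz]
          have : ∀ (m : Measure (Fin d → ℝ)), IsProbabilityMeasure m →
              ∫ ψ, g ψ ∂m = f (φ s) := by
            intro m _
            rw [show (fun ψ => g ψ) = fun _ => f (φ s) from funext hgconst]
            simp [measure_univ]
          rw [this (q s') inferInstance, this (r s') inferInstance]
          simp [← hγz]
        · -- γ > 0
          have hglip : ∀ x y, |g x - g y| ≤ γ * dist x y := by
            intro x y
            have h1 := hf.dist_le_mul (φ s + γ • x) (φ s + γ • y)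
            rw [NNReal.coe_one, one_mul, Real.dist_eq] at h1
            have h2 : dist (φ s + γ • x) (φ s + γ • y) = γ * dist x y := by
              rw [dist_add_left, dist_smul₀, Real.norm_eq_abs, abs_of_nonneg hγ0]
            rw [h2] at h1
            exact h1
          set x₀ : Fin d → ℝ := fun _ => (1/2 : ℝ) with hx₀
          set c : ℝ := g x₀ with hc
          set h : (Fin d → ℝ) → ℝ := fun ψ => min 1 (max 0 ((g ψ - c) / γ + 1/2)) with hhdef
          have hh01 : ∀ ψ, h ψ ∈ Set.Icc (0:ℝ) 1 := by
            intro ψ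
            constructor
            · exact le_min zero_le_one (le_max_left _ _)
            · exact min_le_left _ _
          have hhlip : LipschitzWith 1 h := by
            apply LipschitzWith.of_dist_le_mul
            intro x y
            rw [Real.dist_eq, NNReal.coe_one, one_mul]
            calc |h x - h y|
                ≤ |((g x - c)/γ + 1/2) - ((g y - c)/γ + 1/2)| := by
                  refine le_trans (abs_min_sub_min_le_abs' _ _ 1) ?_
                  rw [max_comm (0:ℝ) _, max_comm (0:ℝ) _]
                  exact abs_max_sub_max_le_abs _ _ 0
              _ = |g x - g y| / γ := by
                  rw [show ((g x - c)/γ + 1/2) - ((g y - c)/γ + 1/2) = (g x - g y)/γ from by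
                    field_simp; ring, abs_div, abs_of_pos hγpos]
              _ ≤ (γ * dist x y) / γ := by
                  gcongr
                  exact hglip x y
              _ = dist x y := by field_simp
          have hcube : ∀ ψ ∈ unitCube d, g ψ = γ * h ψ + (c - γ/2) := by
            intro ψ hψ
            have hdist : dist ψ x₀ ≤ 1/2 := by
              refine (dist_pi_le_iff (by norm_num)).mpr fun i => ?_
              rw [Real.dist_eq, hx₀]
              obtain ⟨h0, h1⟩ := hψ i
              rw [abs_le]
              constructor <;> simp only [] <;> linarith
            have hgc : |g ψ - c| ≤ γ/2 := by
              calc |g ψ - c| ≤ γ * dist ψ x₀ := hglip ψ x₀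
                _ ≤ γ * (1/2) := mul_le_mul_of_nonneg_left hdist hγ0
                _ = γ/2 := by ring
            have hin0 : (0:ℝ) ≤ (g ψ - c)/γ + 1/2 := by
              have := (abs_le.mp hgc).1
              have h2 : -(1/2 : ℝ) ≤ (g ψ - c)/γ := by
                rw [le_div_iff₀ hγpos]; linarith
              linarith
            have hin1 : (g ψ - c)/γ + 1/2 ≤ 1 := by
              have := (abs_le.mp hgc).2
              have h2 : (g ψ - c)/γ ≤ 1/2 := by
                rw [div_le_iff₀ hγpos]; linarith
              linarith
            have hh : h ψ = (g ψ - c)/γ + 1/2 := by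
              rw [hhdef]
              simp only []
              rw [max_eq_right hin0, min_eq_right hin1]
            rw [hh]
            field_simp
            ring
          have hhmeas : Measurable h := hhlip.continuous.measurable
          have hint : ∀ (m : Measure (Fin d → ℝ)), IsProbabilityMeasure m →
              m (unitCube d)ᶜ = 0 → ∫ ψ, g ψ ∂m = γ * (∫ ψ, h ψ ∂m) + (c - γ/2) := by
            intro m hm hmc
            have hae : g =ᵐ[m] fun ψ => γ * h ψ + (c - γ/2) := by
              filter_upwards [cube_ae m hmc] with ψ hψ
              exact hcube ψ hψ
            rw [integral_congr_ae hae]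
            have hih : Integrable (fun ψ => γ * h ψ) m := by
              apply Integrable.const_mul
              exact integrable_of_bdd hhmeas 1 (fun x => by
                rw [abs_of_nonneg (hh01 x).1]; exact (hh01 x).2)
            rw [integral_add hih (integrable_const _), integral_const, integral_const_mul]
            simp [measure_univ]
          rw [hint (q s') (hqs s') (hq s').2, hint (r s') (hrs s') (hr s').2]
          have := ih h hhlip hh01 s'
          calc |γ * (∫ ψ, h ψ ∂(q s')) + (c - γ/2) - (γ * (∫ ψ, h ψ ∂(r s')) + (c - γ/2))|
              = γ * |∫ ψ, h ψ ∂(q s') - ∫ ψ, h ψ ∂(r s')| := by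
                rw [show γ * (∫ ψ, h ψ ∂(q s')) + (c - γ/2) - (γ * (∫ ψ, h ψ ∂(r s')) + (c - γ/2))
                    = γ * ((∫ ψ, h ψ ∂(q s')) - (∫ ψ, h ψ ∂(r s'))) from by ring,
                  abs_mul, abs_of_nonneg hγ0]
            _ ≤ γ * (2 * γ ^ n) := mul_le_mul_of_nonneg_left this hγ0
      -- sum up
      have hw1 : ∑ s' : S, ((κ s) {s'}).toReal = 1 := by
        haveI := hκ s
        rw [← ENNReal.toReal_sum (fun s' _ => measure_ne_top _ _), sum_singleton_eq_one]
        simp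
      calc |∑ s' : S, (((κ s) {s'}).toReal * (∫ ψ, f (φ s + γ • ψ) ∂(q s'))
              - ((κ s) {s'}).toReal * (∫ ψ, f (φ s + γ • ψ) ∂(r s')))|
          ≤ ∑ s' : S, |((κ s) {s'}).toReal * (∫ ψ, f (φ s + γ • ψ) ∂(q s'))
              - ((κ s) {s'}).toReal * (∫ ψ, f (φ s + γ • ψ) ∂(r s'))| :=
            Finset.abs_sum_le_sum_abs _ _
        _ ≤ ∑ s' : S, ((κ s) {s'}).toReal * (γ * (2 * γ ^ n)) := by
            apply Finset.sum_le_sum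
            intro s' _
            rw [← mul_sub, abs_mul, abs_of_nonneg ENNReal.toReal_nonneg]
            exact mul_le_mul_of_nonneg_left (hterm s') ENNReal.toReal_nonneg
        _ = (∑ s' : S, ((κ s) {s'}).toReal) * (γ * (2 * γ ^ n)) := by
            rw [Finset.sum_mul]
        _ = 2 * γ ^ (n + 1) := by
            rw [hw1, one_mul, pow_succ]
            ring
  intro f hf hf01 s
  have h0 : Tendsto (fun n : ℕ => 2 * γ ^ n) atTop (𝓝 0) := by
    have := tendsto_pow_atTop_nhds_zero_of_lt_one hγ0 hγ1
    simpa using this.const_mul 2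
  have hle : |∫ x, f x ∂(q s) - ∫ x, f x ∂(r s)| ≤ 0 :=
    ge_of_tendsto' h0 (fun n => key n f hf hf01 s)
  have := abs_nonneg (∫ x, f x ∂(q s) - ∫ x, f x ∂(r s))
  have heq : |∫ x, f x ∂(q s) - ∫ x, f x ∂(r s)| = 0 := le_antisymm hle this
  have := abs_eq_zero.mp heq
  linarith [this]

end Contraction
/-- The `γ`-contractive distributional Bellman operator has a unique fixed point among
state-indexed probability distributions supported in `[0,1]^d`, and this fixed point
is the law of the discounted feature sum `∑_{t=1}^∞ γ^{t-1} φ(s_t)` under the behavior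
policy (whose trajectory measures `μ s` start at `s` and have Markov transitions
`κ`). -/
theorem distributional_bellman_unique_fixed_point
    {S : Type*} [Fintype S] [MeasurableSpace S] [MeasurableSingletonClass S] {d : ℕ}
    (γ : ℝ) (hγ0 : 0 ≤ γ) (hγ1 : γ < 1)
    (φ : S → Fin d → ℝ) (hφ : ∀ s i, φ s i ∈ Set.Icc (0 : ℝ) (1 - γ))
    (κ : S → Measure S) (hκ : ∀ s, IsProbabilityMeasure (κ s))
    (μ : S → Measure (ℕ → S)) (hμ : ∀ s, IsProbabilityMeasure (μ s))
    (hstart : ∀ s, μ s {traj : ℕ → S | traj 0 = s}ᶜ = 0)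
    (hMarkov : ∀ s, (μ s).map (fun traj t => traj (t + 1)) = (κ s).bind μ) :
    ((∀ s, IsProbabilityMeasure ((μ s).map (fun traj => ∑' t : ℕ, γ ^ t • φ (traj t))) ∧
        ((μ s).map (fun traj => ∑' t : ℕ, γ ^ t • φ (traj t))) (unitCube d)ᶜ = 0) ∧
      ∀ s, Tdist γ φ κ (fun s' => (μ s').map (fun traj => ∑' t : ℕ, γ ^ t • φ (traj t))) s
        = (μ s).map (fun traj => ∑' t : ℕ, γ ^ t • φ (traj t))) ∧
    (∀ p : S → Measure (Fin d → ℝ),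
      (∀ s, IsProbabilityMeasure (p s) ∧ p s (unitCube d)ᶜ = 0) →
      (∀ s, Tdist γ φ κ p s = p s) →
      p = fun s => (μ s).map (fun traj => ∑' t : ℕ, γ ^ t • φ (traj t))) := by
  have hFm : Measurable (fun traj : ℕ → S => ∑' t : ℕ, γ ^ t • φ (traj t)) :=
    measurable_Fm hγ0 hγ1 hφ
  have hLprob : ∀ s,
      IsProbabilityMeasure ((μ s).map (fun traj => ∑' t : ℕ, γ ^ t • φ (traj t))) := by
    intro s
    haveI := hμ s
    exact Measure.isProbabilityMeasure_map hFm.aemeasurable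
  have hLsupp : ∀ s,
      ((μ s).map (fun traj => ∑' t : ℕ, γ ^ t • φ (traj t))) (unitCube d)ᶜ = 0 := by
    intro s
    rw [Measure.map_apply hFm (measurableSet_unitCube d).compl]
    have hempty : (fun traj : ℕ → S => ∑' t : ℕ, γ ^ t • φ (traj t)) ⁻¹' (unitCube d)ᶜ = ∅ :=
      Set.eq_empty_iff_forall_notMem.mpr fun traj htraj =>
        htraj (Fm_mem_unitCube hγ0 hγ1 hφ traj)
    rw [hempty]
    exact measure_empty
  have hLfix := fun s => law_is_fixed hγ0 hγ1 hφ κ μ hstart hMarkov s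
  refine ⟨⟨fun s => ⟨hLprob s, hLsupp s⟩, hLfix⟩, ?_⟩
  intro p hp hfix
  set L : S → Measure (Fin d → ℝ) :=
    fun s => (μ s).map (fun traj => ∑' t : ℕ, γ ^ t • φ (traj t)) with hL
  have hLfix' : ∀ s, Tdist γ φ κ L s = L s := fun s => hLfix s
  have hLps : ∀ s, IsProbabilityMeasure (L s) ∧ L s (unitCube d)ᶜ = 0 :=
    fun s => ⟨hLprob s, hLsupp s⟩
  have hcon := contraction_integrals hγ0 hγ1 hφ κ hκ p L hp hLps hfix hLfix'
  funext s
  haveI := (hp s).1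
  haveI : IsProbabilityMeasure (L s) := (hLps s).1
  apply ext_of_lip
  intro f hf hf01
  exact hcon f hf hf01 s
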